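/- Let B and D be two orthogonal projectors on ℝ^N and write D^c := I − D. Then every bandlimited signal can be uniquely reconstructed from its samples on the vertex set selected by D — that is, the map f ↦ Df is injective on the subspace {f : Bf = f} — if and only if ‖B D^c‖₂ < 1 (equivalently ‖D^c B‖₂ < 1), i.e., if and only if B D^c has no eigenvector with singular value 1 (no bandlimited vector perfectly localized on the complement of the sampling set). -/

import Mathlib

open Matrix
open ContinuousLinearMap
open scoped RealInnerProductSpace

section Aux

variable {N : ℕ}

local notation "E" => EuclideanSpace ℝ (Fin N)

lemma proj_inner_self (P : E →L[ℝ] E) (hP : IsSelfAdjoint P)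
    (hP2 : P * P = P) (x : E) : ‖P x‖ ^ 2 = ⟪x, P x⟫ := by
  have h1 : ⟪P x, P x⟫ = ⟪x, P (P x)⟫ := by
    calc ⟪P x, P x⟫ = ⟪(ContinuousLinearMap.adjoint P) x, P x⟫ := by rw [hP.adjoint_eq]
      _ = ⟪x, P (P x)⟫ := ContinuousLinearMap.adjoint_inner_left P (P x) x
  have h2 : P (P x) = P x := by
    have := congrArg (fun T : E →L[ℝ] E => T x) hP2
    simpa using this
  rw [← real_inner_self_eq_norm_sq, h1, h2]

/-- For a self-adjoint idempotent CLM, `‖P x‖ ≤ ‖x‖`. -/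
lemma proj_norm_apply_le (P : E →L[ℝ] E) (hP : IsSelfAdjoint P)
    (hP2 : P * P = P) (x : E) : ‖P x‖ ≤ ‖x‖ := by
  have key := proj_inner_self P hP hP2 x
  have hle : ‖P x‖ ^ 2 ≤ ‖x‖ * ‖P x‖ := by
    rw [key]; exact real_inner_le_norm x (P x)
  rcases eq_or_lt_of_le (norm_nonneg (P x)) with h | h
  · rw [← h]; exact norm_nonneg x
  · nlinarith

/-- If an orthogonal projector preserves the norm of `x`, then it fixes `x`. -/
lemma proj_fix_of_norm_eq (P : E →L[ℝ] E) (hP : IsSelfAdjoint P)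
    (hP2 : P * P = P) (x : E) (h : ‖P x‖ = ‖x‖) : P x = x := by
  have key := proj_inner_self P hP hP2 x
  have hperp : ‖x - P x‖ ^ 2 = 0 := by
    have expand : ‖x - P x‖ ^ 2 = ‖x‖ ^ 2 - 2 * ⟪x, P x⟫ + ‖P x‖ ^ 2 := by
      rw [← real_inner_self_eq_norm_sq, inner_sub_sub_self]
      rw [real_inner_self_eq_norm_sq, real_inner_self_eq_norm_sq,
        real_inner_comm (P x) x]
      ring
    rw [expand, ← key, h]; ring
  have h0 : ‖x - P x‖ = 0 := by nlinarith [norm_nonneg (x - P x)]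
  have : x - P x = 0 := norm_eq_zero.mp h0
  symm; exact sub_eq_zero.mp this

/-- Operator norm attainment on finite-dimensional Euclidean space. -/
lemma exists_norm_attained (T : E →L[ℝ] E) (hT : T ≠ 0) :
    ∃ x : E, ‖x‖ = 1 ∧ ‖T x‖ = ‖T‖ := by
  obtain ⟨v, hv⟩ : ∃ v : E, T v ≠ 0 := by
    by_contra h; push_neg at h
    exact hT (ContinuousLinearMap.ext fun x => by simpa using h x)
  have hv0 : v ≠ 0 := fun h => hv (by simp [h])
  have hu : ‖(‖v‖⁻¹ • v : E)‖ = 1 := by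
    rw [norm_smul, norm_inv, norm_norm]
    field_simp [norm_ne_zero_iff.mpr hv0]
  have hcompact : IsCompact (Metric.sphere (0:E) 1) := isCompact_sphere 0 1
  have hne : (Metric.sphere (0:E) 1).Nonempty :=
    ⟨_, mem_sphere_zero_iff_norm.mpr hu⟩
  obtain ⟨x₀, hx₀mem, hx₀max⟩ := hcompact.exists_isMaxOn hne
    ((continuous_norm.comp T.continuous).continuousOn)
  have hx₀ : ‖x₀‖ = 1 := mem_sphere_zero_iff_norm.mp hx₀mem
  refine ⟨x₀, hx₀, le_antisymm ?_ ?_⟩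
  · have h1 := T.le_opNorm x₀
    rw [hx₀, mul_one] at h1
    exact h1
  apply T.opNorm_le_bound (norm_nonneg _)
  intro x
  rcases eq_or_ne x 0 with rfl | hx
  · simp
  · have hxpos : 0 < ‖x‖ := norm_pos_iff.mpr hx
    have hxs : (‖x‖⁻¹ • x) ∈ Metric.sphere (0:E) 1 := by
      rw [mem_sphere_zero_iff_norm, norm_smul, norm_inv, norm_norm]
      field_simp
    have hb : ‖T (‖x‖⁻¹ • x)‖ ≤ ‖T x₀‖ := hx₀max hxs
    rw [T.map_smul, norm_smul, norm_inv, norm_norm] at hb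
    have : ‖T x‖ = ‖x‖ * (‖x‖⁻¹ * ‖T x‖) := by field_simp
    rw [this, mul_comm (‖T x₀‖) (‖x‖)]
    exact mul_le_mul_of_nonneg_left hb (le_of_lt hxpos)

end Aux


/-- The spectral norm of a real `N × N` matrix: the operator norm of the induced
linear map on `ℝ^N` with the Euclidean norm. -/
noncomputable def matrixSpectralNorm {N : ℕ} (M : Matrix (Fin N) (Fin N) ℝ) : ℝ :=
  ‖Matrix.toEuclideanCLM (𝕜 := ℝ) M‖

/-- **Sampling theorem (Theorem 3).**
Let `B` and `D` be orthogonal projectors on `ℝ^N`, `D^c := I − D`. Every bandlimited signal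
can be uniquely reconstructed from its samples — the map `f ↦ Df` is injective on
`{f : Bf = f}` — iff `‖B D^c‖₂ < 1` (equivalently `‖D^c B‖₂ < 1`), i.e. iff `B D^c` has no
bandlimited vector perfectly localized on the complement of the sampling set. -/
theorem sampling_theorem
    {N : ℕ} (B D : Matrix (Fin N) (Fin N) ℝ)
    (hBsym : B.transpose = B) (hDsym : D.transpose = D)
    (hBidem : B * B = B) (hDidem : D * D = D) :
    Set.InjOn D.mulVec {f : Fin N → ℝ | B.mulVec f = f} ↔
      matrixSpectralNorm (B * (1 - D)) < 1 := by
  classical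
  set T : EuclideanSpace ℝ (Fin N) →L[ℝ] EuclideanSpace ℝ (Fin N) :=
    Matrix.toEuclideanCLM (𝕜 := ℝ) B with hTdef
  set S : EuclideanSpace ℝ (Fin N) →L[ℝ] EuclideanSpace ℝ (Fin N) :=
    Matrix.toEuclideanCLM (𝕜 := ℝ) D with hSdef
  have hBstar : star B = B := by
    rw [Matrix.star_eq_conjTranspose]
    ext i j
    rw [Matrix.conjTranspose_apply]
    simpa using congrFun (congrFun hBsym i) j
  have hDstar : star D = D := by
    rw [Matrix.star_eq_conjTranspose]
    ext i j
    rw [Matrix.conjTranspose_apply]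
    simpa using congrFun (congrFun hDsym i) j
  have hTsa : _root_.IsSelfAdjoint T := by
    rw [hTdef]
    show star (Matrix.toEuclideanCLM (𝕜 := ℝ) B) = Matrix.toEuclideanCLM (𝕜 := ℝ) B
    rw [← map_star, hBstar]
  have hSsa : _root_.IsSelfAdjoint S := by
    rw [hSdef]
    show star (Matrix.toEuclideanCLM (𝕜 := ℝ) D) = Matrix.toEuclideanCLM (𝕜 := ℝ) D
    rw [← map_star, hDstar]
  have hTidem : T * T = T := by rw [hTdef, ← _root_.map_mul, hBidem]
  have hSidem : S * S = S := by rw [hSdef, ← _root_.map_mul, hDidem]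
  have hS'sa : _root_.IsSelfAdjoint (1 - S) := by
    rw [ContinuousLinearMap.isSelfAdjoint_iff']
    rw [map_sub, hSsa.adjoint_eq]
    congr 1
    exact ContinuousLinearMap.adjoint_id
  have hS'idem : (1 - S) * (1 - S) = 1 - S := by
    rw [sub_mul, one_mul, mul_sub, mul_one, hSidem, sub_self, sub_zero]
  have hSS' : S * (1 - S) = 0 := by
    rw [mul_sub, mul_one, hSidem, sub_self]
  have hTC : Matrix.toEuclideanCLM (𝕜 := ℝ) (B * (1 - D)) = T * (1 - S) := by
    rw [_root_.map_mul, map_sub, _root_.map_one, ← hTdef, ← hSdef]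
  have key : ∀ (A : Matrix (Fin N) (Fin N) ℝ) (f : Fin N → ℝ),
      Matrix.toEuclideanCLM (𝕜 := ℝ) A ((WithLp.equiv 2 (Fin N → ℝ)).symm f) =
        (WithLp.equiv 2 (Fin N → ℝ)).symm (A.mulVec f) := by
    intro A f
    exact Matrix.toEuclideanCLM_toLp A f
  rw [matrixSpectralNorm, hTC]
  constructor
  · intro hinj
    have happle : ∀ x, ‖(T * (1 - S)) x‖ ≤ ‖x‖ := by
      intro x
      rw [ContinuousLinearMap.mul_apply]
      exact (proj_norm_apply_le T hTsa hTidem _).trans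
        (proj_norm_apply_le (1 - S) hS'sa hS'idem x)
    have hle : ‖T * (1 - S)‖ ≤ 1 := by
      apply ContinuousLinearMap.opNorm_le_bound _ zero_le_one
      intro x; rw [one_mul]; exact happle x
    rcases lt_or_eq_of_le hle with h | h
    · exact h
    exfalso
    have hne0 : T * (1 - S) ≠ 0 := by
      intro h0; rw [h0, norm_zero] at h; exact one_ne_zero h.symm
    obtain ⟨x₀, hx₀, hx₀n⟩ := exists_norm_attained _ hne0
    rw [h] at hx₀n
    set y : EuclideanSpace ℝ (Fin N) := (1 - S) x₀ with hydef
    have hTy : ‖T y‖ = 1 := by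
      rw [hydef, ← ContinuousLinearMap.mul_apply]; exact hx₀n
    have hy1 : ‖y‖ = 1 := by
      have h1 : ‖y‖ ≤ 1 := by
        rw [hydef]
        calc ‖(1 - S) x₀‖ ≤ ‖x₀‖ := proj_norm_apply_le (1 - S) hS'sa hS'idem x₀
          _ = 1 := hx₀
      have h2 : 1 ≤ ‖y‖ := hTy ▸ proj_norm_apply_le T hTsa hTidem y
      linarith
    have hTyy : T y = y := proj_fix_of_norm_eq T hTsa hTidem y (by rw [hTy, hy1])
    have hSy : S y = 0 := by
      rw [hydef]
      have h1 : S ((1 - S) x₀) = (S * (1 - S)) x₀ := rfl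
      rw [h1, hSS']; rfl
    set g : Fin N → ℝ := WithLp.equiv 2 (Fin N → ℝ) y with hgdef
    have hyg : (WithLp.equiv 2 (Fin N → ℝ)).symm g = y := by
      rw [hgdef]; exact (WithLp.equiv 2 (Fin N → ℝ)).symm_apply_apply y
    have hBg : B.mulVec g = g := by
      have h2 := key B g
      rw [hyg, ← hTdef, hTyy] at h2
      apply (WithLp.equiv 2 (Fin N → ℝ)).symm.injective
      rw [← h2, hyg]
    have hDg : D.mulVec g = 0 := by
      have h1 := key D g
      rw [hyg, ← hSdef, hSy] at h1
      apply (WithLp.equiv 2 (Fin N → ℝ)).symm.injective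
      rw [← h1]
      simp
    have hg0 : g = (0 : Fin N → ℝ) := by
      apply hinj (Set.mem_setOf_eq ▸ hBg)
        (by simp [Set.mem_setOf_eq, Matrix.mulVec_zero])
      rw [hDg, Matrix.mulVec_zero]
    have hy0 : y = 0 := by rw [← hyg, hg0]; simp
    rw [hy0, norm_zero] at hy1
    exact one_ne_zero hy1.symm
  · intro hlt f hf g hg hfg
    have hk : B.mulVec (f - g) = f - g := by
      rw [Matrix.mulVec_sub, hf, hg]
    have hDk : D.mulVec (f - g) = 0 := by
      rw [Matrix.mulVec_sub, hfg, sub_self]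
    have hCk : (B * (1 - D)).mulVec (f - g) = f - g := by
      rw [← Matrix.mulVec_mulVec, Matrix.sub_mulVec, Matrix.one_mulVec, hDk, sub_zero, hk]
    set x : EuclideanSpace ℝ (Fin N) := (WithLp.equiv 2 (Fin N → ℝ)).symm (f - g) with hxdef
    have hTx : (T * (1 - S)) x = x := by
      rw [hxdef, ← hTC, key, hCk]
    have hx0 : x = 0 := by
      by_contra hne
      have hpos : 0 < ‖x‖ := norm_pos_iff.mpr hne
      have hb : ‖x‖ ≤ ‖T * (1 - S)‖ * ‖x‖ := by
        conv_lhs => rw [← hTx]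
        exact ContinuousLinearMap.le_opNorm _ x
      nlinarith
    have hsub : f - g = 0 := by
      have h3 := congrArg (WithLp.equiv 2 (Fin N → ℝ)) hx0
      simpa [hxdef] using h3
    exact sub_eq_zero.mp hsub
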